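/- arXiv:0706.1677 — 2 statements merged into one kernel-verified Lean document; each statement's English description precedes it below -/
import Mathlib

section
/- Let ω ⊂ ℝ^d be an (r,R)-Delone set of finite local complexity. For any ε > 0 and D > 0, set ρ(D) = D + R + ε + 1/ε. Then N(D,ε) ≤ M(ε) · card(p_ω(ρ(D))), where M(ε) is the minimal number of balls of radius ε/2 needed to cover the closed ball B_R ⊂ ℝ^d and N(D,ε) is the maximal cardinality of a (D,ε)-separated subset of the hull Ω(ω). -/
open MeasureTheory Filter

noncomputable section

/-- The translate `-x + ξ = {-x + y : y ∈ ξ}`. -/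
def transl {d : ℕ} (x : EuclideanSpace ℝ (Fin d)) (ξ : Set (EuclideanSpace ℝ (Fin d))) :
    Set (EuclideanSpace ℝ (Fin d)) := (fun y => y - x) '' ξ

/-- `ξ` is uniformly discrete with packing radius `r`. -/
def UnifDiscrete {d : ℕ} (r : ℝ) (ξ : Set (EuclideanSpace ℝ (Fin d))) : Prop :=
  ∀ x : EuclideanSpace ℝ (Fin d), (ξ ∩ Metric.ball x r).Subsingleton

/-- `ξ` is relatively dense with covering radius `R`. -/
def RelDense {d : ℕ} (R : ℝ) (ξ : Set (EuclideanSpace ℝ (Fin d))) : Prop :=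
  ∀ x : EuclideanSpace ℝ (Fin d), (ξ ∩ Metric.closedBall x R).Nonempty

/-- The set of `D`-patches of `ω`. -/
def patches {d : ℕ} (ω : Set (EuclideanSpace ℝ (Fin d))) (D : ℝ) :
    Set (Set (EuclideanSpace ℝ (Fin d))) :=
  {P | ∃ x ∈ ω, P = transl x ω ∩ Metric.closedBall 0 D}

/-- Finite local complexity. -/
def FLC {d : ℕ} (ω : Set (EuclideanSpace ℝ (Fin d))) : Prop :=
  ∀ D : ℝ, 0 < D → (patches ω D).Finite

/-- The patch counting entropy of `ω`. -/
def hpc {d : ℕ} (ω : Set (EuclideanSpace ℝ (Fin d))) : ℝ :=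
  Filter.limsup (fun n : ℕ =>
    Real.log ((patches ω (n : ℝ)).ncard) /
      (volume (Metric.closedBall (0 : EuclideanSpace ℝ (Fin d)) (n : ℝ))).toReal) atTop

/-- `F` is a repetitivity function for `ω`. -/
def RepetitivityFn {d : ℕ} (ω : Set (EuclideanSpace ℝ (Fin d))) (F : ℝ → ℝ) : Prop :=
  ∀ D : ℝ, 1 ≤ D → ∀ x ∈ ω, ∀ P ∈ patches ω D,
    ∃ y ∈ ω ∩ Metric.closedBall x (F D), P = transl y ω ∩ Metric.closedBall 0 D

/-- The Delone metric on uniformly discrete subsets of `ℝ^d`. -/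
def deloneDist {d : ℕ} (ξ₁ ξ₂ : Set (EuclideanSpace ℝ (Fin d))) : ℝ :=
  min (1 / Real.sqrt 2)
    (sInf {S : ℝ | 0 < S ∧ ∃ u ∈ Metric.closedBall (0 : EuclideanSpace ℝ (Fin d)) S,
      ∃ v ∈ Metric.closedBall (0 : EuclideanSpace ℝ (Fin d)) S,
        transl u ξ₁ ∩ Metric.closedBall 0 (1 / S) =
          transl v ξ₂ ∩ Metric.closedBall 0 (1 / S)})

/-- An `(r,R)`-Delone set. -/
def IsDelone {d : ℕ} (r R : ℝ) (ω : Set (EuclideanSpace ℝ (Fin d))) : Prop :=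
  UnifDiscrete r ω ∧ RelDense R ω

/-- The hull of `ω`: the closure of the translation orbit of `ω` in the space of
`(r,R)`-Delone sets equipped with the Delone metric. -/
def hull {d : ℕ} (r R : ℝ) (ω : Set (EuclideanSpace ℝ (Fin d))) :
    Set (Set (EuclideanSpace ℝ (Fin d))) :=
  {ω' | IsDelone r R ω' ∧ ∀ ε : ℝ, 0 < ε →
    ∃ x : EuclideanSpace ℝ (Fin d), deloneDist (transl x ω) ω' < ε}

/-- `Ξ` is a `(D,ε)`-separated set in the hull (w.r.t. the Delone metric and the
translation action). -/
def IsSepHull {d : ℕ} (D ε : ℝ) (Ξ : Set (Set (EuclideanSpace ℝ (Fin d)))) : Prop :=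
  ∀ ξ₁ ∈ Ξ, ∀ ξ₂ ∈ Ξ, ξ₁ ≠ ξ₂ →
    ∃ x ∈ Metric.closedBall (0 : EuclideanSpace ℝ (Fin d)) D,
      ε < deloneDist (transl x ξ₁) (transl x ξ₂)

/-- `N(D,ε)`: the maximal cardinality of a `(D,ε)`-separated subset of the hull. -/
def sepNumHull {d : ℕ} (r R : ℝ) (ω : Set (EuclideanSpace ℝ (Fin d))) (D ε : ℝ) : ℕ :=
  sSup {k : ℕ | ∃ Ξ : Finset (Set (EuclideanSpace ℝ (Fin d))),
    (Ξ : Set (Set (EuclideanSpace ℝ (Fin d)))) ⊆ hull r R ω ∧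
    IsSepHull D ε (Ξ : Set (Set (EuclideanSpace ℝ (Fin d)))) ∧ Ξ.card = k}

/-- `H_ε(Ω(ω), α) = limsup_n (1/|B_n|) log N(n,ε)`. -/
def HepsHull {d : ℕ} (r R : ℝ) (ω : Set (EuclideanSpace ℝ (Fin d))) (ε : ℝ) : ℝ :=
  Filter.limsup (fun n : ℕ =>
    Real.log (sepNumHull r R ω (n : ℝ) ε) /
      (volume (Metric.closedBall (0 : EuclideanSpace ℝ (Fin d)) (n : ℝ))).toReal) atTop

/-- Topological entropy of the hull dynamical system, as the supremum (= limit as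
`ε → 0`, by antitonicity) of the `H_ε`. -/
def htopHull {d : ℕ} (r R : ℝ) (ω : Set (EuclideanSpace ℝ (Fin d))) : ℝ :=
  ⨆ ε : {ε : ℝ // 0 < ε}, HepsHull r R ω ε

/-- `M(ε)`: the minimal number of closed balls of radius `ε/2` needed to cover the
closed ball of radius `R` in `ℝ^d`. -/
def coverNum (d : ℕ) (R ε : ℝ) : ℕ :=
  sInf {k : ℕ | ∃ s : Finset (EuclideanSpace ℝ (Fin d)), s.card = k ∧
    Metric.closedBall (0 : EuclideanSpace ℝ (Fin d)) R ⊆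
      ⋃ x ∈ s, Metric.closedBall x (ε / 2)}

open Metric in
lemma mem_transl {d : ℕ} {x a : EuclideanSpace ℝ (Fin d)} {ξ : Set (EuclideanSpace ℝ (Fin d))} :
    a ∈ transl x ξ ↔ a + x ∈ ξ := by
  simp [transl, sub_eq_iff_eq_add]

lemma transl_transl {d : ℕ} (u x : EuclideanSpace ℝ (Fin d)) (ξ : Set (EuclideanSpace ℝ (Fin d))) :
    transl u (transl x ξ) = transl (x + u) ξ := by
  ext a
  rw [mem_transl, mem_transl, mem_transl, show a + u + x = a + (x + u) by abel]

open Metric in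
lemma transl_delone {d : ℕ} {r R : ℝ} (x : EuclideanSpace ℝ (Fin d))
    {ξ : Set (EuclideanSpace ℝ (Fin d))} (h : IsDelone r R ξ) : IsDelone r R (transl x ξ) := by
  constructor
  · intro c a ha b hb
    have ha' : a + x ∈ ξ ∩ ball (c + x) r := by
      refine ⟨mem_transl.mp ha.1, ?_⟩
      rw [mem_ball, dist_add_right]
      exact mem_ball.mp ha.2
    have hb' : b + x ∈ ξ ∩ ball (c + x) r := by
      refine ⟨mem_transl.mp hb.1, ?_⟩
      rw [mem_ball, dist_add_right]
      exact mem_ball.mp hb.2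
    have := h.1 (c + x) ha' hb'
    exact add_right_cancel this
  · intro c
    obtain ⟨p, hp, hpc⟩ := h.2 (c + x)
    refine ⟨p - x, mem_transl.mpr (by rwa [sub_add_cancel]), ?_⟩
    rw [mem_closedBall, dist_eq_norm, show p - x - c = p - (c + x) by abel, ← dist_eq_norm]
    exact mem_closedBall.mp hpc

open Metric in
lemma delone_set_nonempty {d : ℕ} {r R : ℝ} (hr : 0 < r) (hR : 0 < R)
    {ξ₁ ξ₂ : Set (EuclideanSpace ℝ (Fin d))} (h₁ : IsDelone r R ξ₁) (h₂ : IsDelone r R ξ₂) :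
    {S : ℝ | 0 < S ∧ ∃ u ∈ Metric.closedBall (0 : EuclideanSpace ℝ (Fin d)) S,
      ∃ v ∈ Metric.closedBall (0 : EuclideanSpace ℝ (Fin d)) S,
        transl u ξ₁ ∩ Metric.closedBall 0 (1 / S) =
          transl v ξ₂ ∩ Metric.closedBall 0 (1 / S)}.Nonempty := by
  rcases Nat.eq_zero_or_pos d with hd | hd
  · subst hd
    have hsub : ξ₁ = ξ₂ := by
      obtain ⟨p, hp, -⟩ := h₁.2 0
      obtain ⟨q, hq, -⟩ := h₂.2 0
      ext z
      constructor <;> intro _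
      · exact (Subsingleton.elim z q) ▸ hq
      · exact (Subsingleton.elim z p) ▸ hp
    exact ⟨1, by norm_num, 0, by simp, 0, by simp, by rw [hsub]⟩
  · obtain ⟨e, he⟩ : ∃ e : EuclideanSpace ℝ (Fin d), ‖e‖ = r/2 :=
      ⟨EuclideanSpace.single ⟨0, hd⟩ (r/2), by
        rw [EuclideanSpace.norm_single]; exact abs_of_pos (by positivity)⟩
    have key : ∀ ξ : Set (EuclideanSpace ℝ (Fin d)), IsDelone r R ξ →
        ∃ u : EuclideanSpace ℝ (Fin d), ‖u‖ ≤ R + r/2 ∧ ∀ q ∈ ξ, r/2 ≤ dist q u := by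
      intro ξ h
      obtain ⟨p, hp, hpR⟩ := h.2 0
      have hpR' : ‖p‖ ≤ R := mem_closedBall_zero_iff.mp hpR
      refine ⟨p + e, ?_, ?_⟩
      · calc ‖p + e‖ ≤ ‖p‖ + ‖e‖ := norm_add_le _ _
          _ ≤ R + r/2 := by rw [he]; linarith
      · intro q hq
        by_cases hqp : q = p
        · subst hqp
          rw [dist_eq_norm, show q - (q + e) = -e by abel, norm_neg, he]
        · have hq' : ¬ (dist q p < r) := by
            intro hlt
            exact hqp (h.1 p ⟨hq, mem_ball.mpr hlt⟩ ⟨hp, mem_ball.mpr (by simpa using hr)⟩)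
          have h1 : r ≤ dist q p := not_lt.mp hq'
          have h2 : dist q p ≤ dist q (p + e) + dist (p + e) p := dist_triangle _ _ _
          have h3 : dist (p + e) p = r/2 := by
            rw [dist_eq_norm, show p + e - p = e by abel, he]
          linarith
    obtain ⟨u, huB, hu⟩ := key ξ₁ h₁
    obtain ⟨v, hvB, hv⟩ := key ξ₂ h₂
    set S := max (R + r/2) (2/r + 1) with hSdef
    have hS0 : 0 < S := lt_of_lt_of_le (by positivity : (0:ℝ) < 2/r + 1) (le_max_right _ _)
    have hSr : 1/S < r/2 := by
      have hA : 2/r < S := lt_of_lt_of_le (lt_add_of_pos_right _ one_pos) (le_max_right _ _)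
      have hB : (0:ℝ) < 2/r := by positivity
      calc 1/S < 1/(2/r) := one_div_lt_one_div_of_lt hB hA
        _ = r/2 := one_div_div _ _
    have hemp : ∀ (ξ : Set (EuclideanSpace ℝ (Fin d))) (w : EuclideanSpace ℝ (Fin d)),
        (∀ q ∈ ξ, r/2 ≤ dist q w) → transl w ξ ∩ closedBall 0 (1/S) = ∅ := by
      intro ξ w hw
      ext a
      simp only [Set.mem_inter_iff, mem_transl, mem_closedBall_zero_iff,
        Set.mem_empty_iff_false, iff_false, not_and]
      intro h1 h2
      have h3 := hw _ h1
      rw [dist_eq_norm, add_sub_cancel_right] at h3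
      linarith
    refine ⟨S, hS0, u, mem_closedBall_zero_iff.mpr (le_trans huB (le_max_left _ _)),
      v, mem_closedBall_zero_iff.mpr (le_trans hvB (le_max_left _ _)), ?_⟩
    rw [hemp ξ₁ u hu, hemp ξ₂ v hv]

open Metric in
lemma exists_patch {d : ℕ} {r R ρ : ℝ} (hr : 0 < r) (hR : 0 < R) (hρ : 0 < ρ)
    {ω ξ : Set (EuclideanSpace ℝ (Fin d))} (hω : IsDelone r R ω) (hξ : ξ ∈ hull r R ω) :
    ∃ t, t ∈ ξ ∧ ‖t‖ ≤ R ∧ transl t ξ ∩ closedBall 0 ρ ∈ patches ω ρ := by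
  set δ := min (1/3 : ℝ) (1/(ρ + R + 1)) with hδdef
  have hδpos : 0 < δ := lt_min (by norm_num) (by positivity)
  obtain ⟨x, hx⟩ := hξ.2 δ hδpos
  unfold deloneDist at hx
  have hδ3 : δ ≤ 1/3 := min_le_left _ _
  have hsqrt : (1:ℝ)/3 ≤ 1 / Real.sqrt 2 := by
    have h1 : Real.sqrt 2 ≤ 3 := by
      nlinarith [Real.sq_sqrt (by norm_num : (0:ℝ) ≤ 2), Real.sqrt_nonneg 2]
    have h2 : (0:ℝ) < Real.sqrt 2 := Real.sqrt_pos.mpr (by norm_num)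
    rw [div_le_div_iff₀ (by norm_num) h2]
    linarith
  have hsinf : sInf {S : ℝ | 0 < S ∧ ∃ u ∈ Metric.closedBall (0 : EuclideanSpace ℝ (Fin d)) S,
      ∃ v ∈ Metric.closedBall (0 : EuclideanSpace ℝ (Fin d)) S,
        transl u (transl x ω) ∩ Metric.closedBall 0 (1 / S) =
          transl v ξ ∩ Metric.closedBall 0 (1 / S)} < δ := by
    rcases min_lt_iff.mp hx with h | h
    · exact absurd h (not_lt.mpr (le_trans hδ3 hsqrt))
    · exact h
  obtain ⟨S, hSmem, hSδ⟩ := exists_lt_of_csInf_lt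
    (delone_set_nonempty hr hR (transl_delone x hω) hξ.1) hsinf
  obtain ⟨hS0, u, hu, v, hv, heq⟩ := hSmem
  rw [transl_transl] at heq
  have huS : ‖u‖ ≤ S := mem_closedBall_zero_iff.mp hu
  have hvS : ‖v‖ ≤ S := mem_closedBall_zero_iff.mp hv
  have hS1 : S ≤ 1 := le_of_lt (lt_of_lt_of_le hSδ (le_trans hδ3 (by norm_num)))
  have h1S : ρ + R + 1 ≤ 1/S := by
    have h2 : S < 1/(ρ+R+1) := lt_of_lt_of_le hSδ (min_le_right _ _)
    have hpos : (0:ℝ) < ρ + R + 1 := by positivity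
    rw [le_div_iff₀ hS0]
    have h3 : (ρ+R+1) * S < (ρ+R+1) * (1/(ρ+R+1)) := mul_lt_mul_of_pos_left h2 hpos
    rw [mul_one_div, div_self hpos.ne'] at h3
    linarith
  obtain ⟨t, ht, htR⟩ := hξ.1.2 0
  have htR' : ‖t‖ ≤ R := mem_closedBall_zero_iff.mp htR
  refine ⟨t, ht, htR', ?_⟩
  have hz : t - v + (x + u) ∈ ω := by
    have hmem : t - v ∈ transl v ξ ∩ closedBall 0 (1/S) := by
      refine ⟨mem_transl.mpr (by rwa [sub_add_cancel]), mem_closedBall_zero_iff.mpr ?_⟩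
      have := norm_sub_le t v
      linarith
    rw [← heq] at hmem
    have := mem_transl.mp hmem.1
    exact this
  refine ⟨t - v + (x + u), hz, ?_⟩
  ext a
  simp only [Set.mem_inter_iff, mem_transl, mem_closedBall_zero_iff]
  constructor
  · rintro ⟨h1, h2⟩
    refine ⟨?_, h2⟩
    have hb : (a + t) - v ∈ transl v ξ ∩ closedBall 0 (1/S) := by
      refine ⟨mem_transl.mpr (by rwa [sub_add_cancel]), mem_closedBall_zero_iff.mpr ?_⟩
      have hc1 := norm_sub_le (a + t) v
      have hc2 := norm_add_le a t
      linarith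
    rw [← heq] at hb
    have h3 := mem_transl.mp hb.1
    rwa [show a + t - v + (x + u) = a + (t - v + (x + u)) by abel] at h3
  · rintro ⟨h1, h2⟩
    refine ⟨?_, h2⟩
    have hb : (a + (t - v + (x + u))) - (x + u) ∈ transl (x + u) ω ∩ closedBall 0 (1/S) := by
      refine ⟨mem_transl.mpr (by rwa [sub_add_cancel]), mem_closedBall_zero_iff.mpr ?_⟩
      rw [show a + (t - v + (x + u)) - (x + u) = (a + t) - v by abel]
      have hc1 := norm_sub_le (a + t) v
      have hc2 := norm_add_le a t
      linarith
    rw [heq] at hb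
    have h3 := mem_transl.mp hb.1
    rwa [show a + (t - v + (x + u)) - (x + u) + v = a + t by abel] at h3

open Metric in
lemma deloneDist_le_of_patch_eq {d : ℕ} {R : ℝ} {ξ₁ ξ₂ : Set (EuclideanSpace ℝ (Fin d))}
    {t₁ t₂ x : EuclideanSpace ℝ (Fin d)} {ε D ρ : ℝ}
    (hε : 0 < ε) (ht₁ : ‖t₁‖ ≤ R) (ht₂ : ‖t₂‖ ≤ R) (htt : ‖t₁ - t₂‖ ≤ ε)
    (hx : ‖x‖ ≤ D) (hρ : D + R + 1/ε ≤ ρ)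
    (hP : transl t₁ ξ₁ ∩ closedBall 0 ρ = transl t₂ ξ₂ ∩ closedBall 0 ρ) :
    deloneDist (transl x ξ₁) (transl x ξ₂) ≤ ε := by
  unfold deloneDist
  refine le_trans (min_le_right _ _) (csInf_le ⟨0, fun S hS => le_of_lt hS.1⟩ ?_)
  refine ⟨hε, t₁ - t₂, mem_closedBall_zero_iff.mpr htt, 0,
    mem_closedBall_zero_iff.mpr (by simpa using le_of_lt hε), ?_⟩
  rw [transl_transl, transl_transl]
  ext a
  simp only [Set.mem_inter_iff, mem_transl, mem_closedBall_zero_iff]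
  have hxt : ‖x - t₂‖ ≤ D + R := by
    have := norm_sub_le x t₂
    linarith
  constructor
  · rintro ⟨h1, h2⟩
    refine ⟨?_, h2⟩
    have hb : (a + (x + (t₁ - t₂))) - t₁ ∈ transl t₁ ξ₁ ∩ closedBall 0 ρ := by
      refine ⟨mem_transl.mpr (by rwa [sub_add_cancel]), mem_closedBall_zero_iff.mpr ?_⟩
      rw [show a + (x + (t₁ - t₂)) - t₁ = a + (x - t₂) by abel]
      have := norm_add_le a (x - t₂)
      linarith
    rw [hP] at hb
    have h3 := mem_transl.mp hb.1
    rwa [show a + (x + (t₁ - t₂)) - t₁ + t₂ = a + (x + 0) by abel] at h3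
  · rintro ⟨h1, h2⟩
    refine ⟨?_, h2⟩
    have hb : (a + (x + 0)) - t₂ ∈ transl t₂ ξ₂ ∩ closedBall 0 ρ := by
      refine ⟨mem_transl.mpr (by rwa [sub_add_cancel]), mem_closedBall_zero_iff.mpr ?_⟩
      rw [show a + (x + 0) - t₂ = a + (x - t₂) by abel]
      have := norm_add_le a (x - t₂)
      linarith
    rw [← hP] at hb
    have h3 := mem_transl.mp hb.1
    rwa [show a + (x + 0) - t₂ + t₁ = a + (x + (t₁ - t₂)) by abel] at h3

open Metric

theorem sepNum_le_coverNum_mul_patches {d : ℕ} (r R : ℝ) (hr : 0 < r) (hrR : r ≤ R)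
    (ω : Set (EuclideanSpace ℝ (Fin d))) (hω : IsDelone r R ω) (hflc : FLC ω)
    (ε D : ℝ) (hε : 0 < ε) (hD : 0 < D) :
    (sepNumHull r R ω D ε : ℝ) ≤
      (coverNum d R ε : ℝ) * ((patches ω (D + R + ε + 1 / ε)).ncard : ℝ) := by
  have hR : 0 < R := lt_of_lt_of_le hr hrR
  set ρ := D + R + ε + 1 / ε with hρdef
  have hρ0 : 0 < ρ := by rw [hρdef]; positivity
  have hpatfin : (patches ω ρ).Finite := hflc ρ hρ0
  have hcovne : {k : ℕ | ∃ s : Finset (EuclideanSpace ℝ (Fin d)), s.card = k ∧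
      Metric.closedBall (0 : EuclideanSpace ℝ (Fin d)) R ⊆
        ⋃ x ∈ s, Metric.closedBall x (ε / 2)}.Nonempty := by
    obtain ⟨s, hs⟩ := (isCompact_closedBall (0 : EuclideanSpace ℝ (Fin d)) R).elim_finite_subcover
      (fun c : EuclideanSpace ℝ (Fin d) => Metric.ball c (ε/2)) (fun c => isOpen_ball)
      (fun z _ => Set.mem_iUnion.mpr ⟨z, mem_ball_self (by positivity)⟩)
    exact ⟨s.card, s, rfl, hs.trans (Set.iUnion₂_mono fun c _ => ball_subset_closedBall)⟩
  have hmemcov : coverNum d R ε ∈ {k : ℕ | ∃ s : Finset (EuclideanSpace ℝ (Fin d)), s.card = k ∧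
      Metric.closedBall (0 : EuclideanSpace ℝ (Fin d)) R ⊆
        ⋃ x ∈ s, Metric.closedBall x (ε / 2)} := Nat.sInf_mem hcovne
  obtain ⟨s, hscard, hscov⟩ := hmemcov
  have key : sepNumHull r R ω D ε ≤ coverNum d R ε * (patches ω ρ).ncard := by
    rw [sepNumHull]
    apply csSup_le
    · exact ⟨0, ∅, by simp, fun ξ₁ h₁ => by simp at h₁, rfl⟩
    · rintro k ⟨Ξ, hΞhull, hΞsep, rfl⟩
      have hch : ∀ ξ : Set (EuclideanSpace ℝ (Fin d)),
          ∃ t c P, ξ ∈ Ξ → t ∈ ξ ∧ ‖t‖ ≤ R ∧ c ∈ s ∧ dist t c ≤ ε/2 ∧ P ∈ patches ω ρ ∧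
            transl t ξ ∩ closedBall 0 ρ = P := by
        intro ξ
        by_cases hξ : ξ ∈ Ξ
        · obtain ⟨t, ht, htR, hP⟩ := exists_patch hr hR hρ0 hω
            (hΞhull (Finset.mem_coe.mpr hξ))
          have hcov : t ∈ ⋃ c ∈ s, Metric.closedBall c (ε/2) :=
            hscov (mem_closedBall_zero_iff.mpr htR)
          rw [Set.mem_iUnion₂] at hcov
          obtain ⟨c, hc, htc⟩ := hcov
          exact ⟨t, c, transl t ξ ∩ closedBall 0 ρ,
            fun _ => ⟨ht, htR, hc, Metric.mem_closedBall.mp htc, hP, rfl⟩⟩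
        · exact ⟨0, 0, ∅, fun h => absurd h hξ⟩
      choose tf cf Pf hf using hch
      have hcard : Ξ.card ≤ (s ×ˢ hpatfin.toFinset).card := by
        apply Finset.card_le_card_of_injOn (fun ξ => (cf ξ, Pf ξ))
        · intro ξ hξ
          obtain ⟨_, _, hc, _, hP, _⟩ := hf ξ hξ
          exact Finset.mem_product.mpr ⟨hc, hpatfin.mem_toFinset.mpr hP⟩
        · intro ξ₁ h₁ ξ₂ h₂ heq12
          by_contra hne
          obtain ⟨x, hxD, hgt⟩ := hΞsep ξ₁ h₁ ξ₂ h₂ hne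
          obtain ⟨ht₁, htR₁, hc₁, htc₁, hP₁, hQ₁⟩ := hf ξ₁ (Finset.mem_coe.mp h₁)
          obtain ⟨ht₂, htR₂, hc₂, htc₂, hP₂, hQ₂⟩ := hf ξ₂ (Finset.mem_coe.mp h₂)
          have hcc : cf ξ₁ = cf ξ₂ := congrArg Prod.fst heq12
          have hPP : Pf ξ₁ = Pf ξ₂ := congrArg Prod.snd heq12
          have htt : ‖tf ξ₁ - tf ξ₂‖ ≤ ε := by
            rw [← dist_eq_norm]
            have hd1 : dist (tf ξ₁) (tf ξ₂) ≤ dist (tf ξ₁) (cf ξ₁) + dist (cf ξ₁) (tf ξ₂) :=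
              dist_triangle _ _ _
            have hd2 : dist (cf ξ₁) (tf ξ₂) = dist (tf ξ₂) (cf ξ₂) := by rw [hcc, dist_comm]
            linarith
          have hQ : transl (tf ξ₁) ξ₁ ∩ closedBall 0 ρ = transl (tf ξ₂) ξ₂ ∩ closedBall 0 ρ := by
            rw [hQ₁, hPP, hQ₂]
          have hle := deloneDist_le_of_patch_eq hε htR₁ htR₂ htt
            (mem_closedBall_zero_iff.mp hxD) (by rw [hρdef]; linarith) hQ
          exact absurd hle (not_le.mpr hgt)
      calc Ξ.card ≤ (s ×ˢ hpatfin.toFinset).card := hcard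
        _ = s.card * hpatfin.toFinset.card := Finset.card_product _ _
        _ = coverNum d R ε * (patches ω ρ).ncard := by
            rw [hscard, Set.ncard_eq_toFinset_card _ hpatfin]
  exact_mod_cast key
end
end

section
/- Let a_n = 1 + e + e² + ⋯ + e^{n−1} and Λ = {±a_n : n ∈ ℕ} ⊂ ℝ. Then the patch counting function of Λ grows at most logarithmically: there is a constant C such that card(p_Λ(D)) ≤ C·log(D) + C for all D ≥ 2, and consequently the patch counting entropy h_pc(Λ) = limsup_{n→∞} (1/(2n)) log card(p_Λ(n)) equals 0. -/
open Filter

noncomputable section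

/-- `a n = 1 + e + e² + ⋯ + e^{n-1}`. -/
def geomE (n : ℕ) : ℝ := ∑ i ∈ Finset.range n, Real.exp 1 ^ i

/-- `Λ = {± a n : n ≥ 1}`. -/
def Lam : Set ℝ := {x | ∃ n : ℕ, 1 ≤ n ∧ (x = geomE n ∨ x = -geomE n)}

/-- The set of `D`-patches of `Λ`: `(−x + Λ) ∩ [−D, D]` for `x ∈ Λ`. -/
def patchesLam (D : ℝ) : Set (Set ℝ) :=
  {P | ∃ x ∈ Lam, P = ((fun y => y - x) '' Lam) ∩ Set.Icc (-D) D}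

lemma geomE_gap {m n : ℕ} (h : m < n) : Real.exp 1 ^ (n - 1) ≤ geomE n - geomE m := by
  have heq : geomE n - geomE m = ∑ i ∈ Finset.Ico m n, Real.exp 1 ^ i := by
    rw [Finset.sum_Ico_eq_sub _ h.le]; rfl
  rw [heq]
  refine Finset.single_le_sum (fun i _ => by positivity) ?_
  simp only [Finset.mem_Ico]
  omega

lemma geomE_ge_pow {n : ℕ} (hn : 1 ≤ n) : Real.exp 1 ^ (n - 1) ≤ geomE n := by
  have := geomE_gap (show 0 < n from hn)
  simpa [geomE] using this

lemma one_le_expow (k : ℕ) : (1 : ℝ) ≤ Real.exp 1 ^ k :=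
  one_le_pow₀ (Real.one_le_exp (by norm_num))

lemma geomE_ge_one {n : ℕ} (hn : 1 ≤ n) : 1 ≤ geomE n :=
  (one_le_expow (n - 1)).trans (geomE_ge_pow hn)

lemma gap_abs {m n : ℕ} (hne : m ≠ n) :
    Real.exp 1 ^ (n - 1) ≤ |geomE m - geomE n| := by
  have hexp : (1 : ℝ) ≤ Real.exp 1 := Real.one_le_exp (by norm_num)
  rcases lt_or_gt_of_ne hne with h | h
  · have h1 := geomE_gap h
    have h0 : (0:ℝ) < Real.exp 1 ^ (n-1) := by positivity
    rw [abs_sub_comm, abs_of_nonneg (by linarith)]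
    exact h1
  · have h1 := geomE_gap h
    have h2 : Real.exp 1 ^ (n - 1) ≤ Real.exp 1 ^ (m - 1) :=
      pow_le_pow_right₀ hexp (by omega)
    have h0 : (0:ℝ) < Real.exp 1 ^ (m-1) := by positivity
    rw [abs_of_nonneg (by linarith)]
    linarith

lemma patch_singleton {D : ℝ} (hD : 0 ≤ D) {n : ℕ} (hn : 1 ≤ n)
    (h1 : D < Real.exp 1 ^ (n - 1)) {x : ℝ} (hx : x = geomE n ∨ x = -geomE n) :
    ((fun y => y - x) '' Lam) ∩ Set.Icc (-D) D = {0} := by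
  have hxLam : x ∈ Lam := ⟨n, hn, hx⟩
  have hgn : Real.exp 1 ^ (n-1) ≤ geomE n := geomE_ge_pow hn
  ext z
  simp only [Set.mem_inter_iff, Set.mem_image, Set.mem_Icc, Set.mem_singleton_iff]
  constructor
  · rintro ⟨⟨y, ⟨m, hm, hy⟩, rfl⟩, hz1, hz2⟩
    have hgm : 1 ≤ geomE m := geomE_ge_one hm
    have habs : |y - x| ≤ D := abs_le.mpr ⟨hz1, hz2⟩
    by_contra hne0
    have key : D < |y - x| := by
      rcases hy with rfl | rfl <;> rcases hx with rfl | rfl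
      · have hmn : m ≠ n := by rintro rfl; exact hne0 (sub_self _)
        exact h1.trans_le (gap_abs hmn)
      · have : geomE m - -geomE n = geomE m + geomE n := by ring
        rw [this, abs_of_nonneg (by linarith)]
        linarith
      · have : -geomE m - geomE n = -(geomE m + geomE n) := by ring
        rw [this, abs_neg, abs_of_nonneg (by linarith)]
        linarith
      · have hmn : m ≠ n := by
          rintro rfl; exact hne0 (by ring)
        have : -geomE m - -geomE n = geomE n - geomE m := by ring
        rw [this, abs_sub_comm]
        exact h1.trans_le (gap_abs hmn)
    exact absurd habs (not_le.mpr key)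
  · rintro rfl
    exact ⟨⟨x, hxLam, sub_self x⟩, by simpa using hD⟩

lemma patch_subset {D : ℝ} (hD : 2 ≤ D) :
    ∃ T : Finset (Set ℝ), patchesLam D ⊆ ↑T ∧ T.card ≤ 2 * (⌊Real.log D⌋.toNat + 2) := by
  classical
  set N : ℕ := ⌊Real.log D⌋.toNat + 2 with hN
  have hDpos : (0:ℝ) < D := by linarith
  have hlog : 0 ≤ Real.log D := Real.log_nonneg (by linarith)
  have hfl : ((⌊Real.log D⌋.toNat : ℕ) : ℝ) = (⌊Real.log D⌋ : ℝ) := by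
    exact_mod_cast Int.toNat_of_nonneg (Int.floor_nonneg.mpr hlog)
  have hDN : D < Real.exp 1 ^ (N - 1) := by
    rw [Real.exp_one_pow]
    have h2 : Real.log D < ((N - 1 : ℕ) : ℝ) := by
      have := Int.lt_floor_add_one (Real.log D)
      have hN1 : ((N - 1 : ℕ) : ℝ) = (⌊Real.log D⌋ : ℝ) + 1 := by
        have he : N - 1 = ⌊Real.log D⌋.toNat + 1 := by omega
        rw [he, Nat.cast_add, Nat.cast_one, hfl]
      linarith
    calc D = Real.exp (Real.log D) := (Real.exp_log hDpos).symm
      _ < _ := Real.exp_lt_exp.mpr h2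
  set S : Finset ℝ := (Finset.Icc 1 N).image geomE ∪ (Finset.Icc 1 N).image (fun k => -geomE k)
    with hS
  refine ⟨S.image (fun x => ((fun y => y - x) '' Lam) ∩ Set.Icc (-D) D), ?_, ?_⟩
  · rintro P ⟨x, ⟨m, hm, hxm⟩, rfl⟩
    simp only [Finset.coe_image, Set.mem_image, Finset.mem_coe]
    by_cases hmN : m ≤ N
    · refine ⟨x, ?_, rfl⟩
      rw [hS]
      rcases hxm with rfl | rfl
      · exact Finset.mem_union_left _ (Finset.mem_image_of_mem _ (Finset.mem_Icc.mpr ⟨hm, hmN⟩))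
      · exact Finset.mem_union_right _ (Finset.mem_image_of_mem _ (Finset.mem_Icc.mpr ⟨hm, hmN⟩))
    · have hDm : D < Real.exp 1 ^ (m - 1) := by
        refine hDN.trans_le (pow_le_pow_right₀ (Real.one_le_exp (by norm_num)) (by omega))
      have h1 : ((fun y => y - x) '' Lam) ∩ Set.Icc (-D) D = {0} :=
        patch_singleton (by linarith) hm hDm hxm
      have h2 : ((fun y => y - geomE N) '' Lam) ∩ Set.Icc (-D) D = {0} :=
        patch_singleton (by linarith) (by omega) hDN (Or.inl rfl)
      refine ⟨geomE N, ?_, by rw [h2, h1]⟩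
      exact Finset.mem_union_left _
        (Finset.mem_image_of_mem _ (Finset.mem_Icc.mpr ⟨by omega, le_refl N⟩))
  · refine Finset.card_image_le.trans ?_
    refine (Finset.card_union_le _ _).trans ?_
    have c1 := Finset.card_image_le (s := Finset.Icc 1 N) (f := geomE)
    have c2 := Finset.card_image_le (s := Finset.Icc 1 N) (f := fun k => -geomE k)
    have : (Finset.Icc 1 N).card = N := by rw [Nat.card_Icc]; omega
    omega

lemma patch_ncard_le {D : ℝ} (hD : 2 ≤ D) :
    (patchesLam D).ncard ≤ 2 * (⌊Real.log D⌋.toNat + 2) ∧ (patchesLam D).Finite := by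
  obtain ⟨T, hsub, hcard⟩ := patch_subset hD
  have hfin : (patchesLam D).Finite := (T.finite_toSet).subset hsub
  constructor
  · calc (patchesLam D).ncard ≤ (↑T : Set (Set ℝ)).ncard :=
        Set.ncard_le_ncard hsub T.finite_toSet
      _ = T.card := Set.ncard_coe_finset T
      _ ≤ _ := hcard
  · exact hfin

lemma patch_nonempty {D : ℝ} : (patchesLam D).Nonempty :=
  ⟨_, geomE 1, ⟨1, le_refl 1, Or.inl rfl⟩, rfl⟩

lemma patch_ncard_real_le {D : ℝ} (hD : 2 ≤ D) :
    ((patchesLam D).ncard : ℝ) ≤ 2 * Real.log D + 4 := by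
  have h := (patch_ncard_le hD).1
  have hlog : 0 ≤ Real.log D := Real.log_nonneg (by linarith)
  have hfl : ((⌊Real.log D⌋.toNat : ℕ) : ℝ) ≤ Real.log D := by
    have : ((⌊Real.log D⌋.toNat : ℕ) : ℝ) = (⌊Real.log D⌋ : ℝ) := by
      exact_mod_cast Int.toNat_of_nonneg (Int.floor_nonneg.mpr hlog)
    rw [this]; exact Int.floor_le _
  calc ((patchesLam D).ncard : ℝ) ≤ ((2 * (⌊Real.log D⌋.toNat + 2) : ℕ) : ℝ) := by
        exact_mod_cast h
    _ = 2 * ((⌊Real.log D⌋.toNat : ℕ) : ℝ) + 4 := by push_cast; ring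
    _ ≤ 2 * Real.log D + 4 := by linarith

theorem lam_patch_count_log_and_hpc_zero :
    (∃ C : ℝ, ∀ D : ℝ, 2 ≤ D →
      ((patchesLam D).ncard : ℝ) ≤ C * Real.log D + C) ∧
    Filter.limsup (fun n : ℕ =>
      Real.log ((patchesLam (n : ℝ)).ncard) / (2 * (n : ℝ))) atTop = 0 := by
  constructor
  · refine ⟨6, fun D hD => ?_⟩
    have h := patch_ncard_real_le hD
    have hlog : 0 ≤ Real.log D := Real.log_nonneg (by linarith)
    linarith
  · have htends : Tendsto (fun n : ℕ =>
        Real.log ((patchesLam (n : ℝ)).ncard) / (2 * (n : ℝ))) atTop (nhds 0) := by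
      have hub : Tendsto (fun n : ℕ => Real.log 6 / (2 * (n : ℝ)) + Real.log n / (2 * (n : ℝ)))
          atTop (nhds 0) := by
        have h1 : Tendsto (fun n : ℕ => Real.log 6 / (2 * (n : ℝ))) atTop (nhds 0) := by
          apply Tendsto.div_atTop tendsto_const_nhds
          exact Tendsto.const_mul_atTop (by norm_num) tendsto_natCast_atTop_atTop
        have h2 : Tendsto (fun n : ℕ => Real.log n / (2 * (n : ℝ))) atTop (nhds 0) := by
          have := Real.tendsto_pow_log_div_mul_add_atTop 2 0 1 two_ne_zero
          simp only [pow_one, add_zero] at this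
          exact this.comp tendsto_natCast_atTop_atTop
        simpa using h1.add h2
      refine tendsto_of_tendsto_of_tendsto_of_le_of_le' tendsto_const_nhds hub ?_ ?_
      · filter_upwards [eventually_ge_atTop 2] with n hn
        have hn2 : (2:ℝ) ≤ (n:ℝ) := by exact_mod_cast hn
        have ⟨hle, hfin⟩ := patch_ncard_le hn2
        have hpos : 0 < (patchesLam (n:ℝ)).ncard :=
          (Set.ncard_pos hfin).mpr patch_nonempty
        have h1 : (1:ℝ) ≤ ((patchesLam (n:ℝ)).ncard : ℝ) := by exact_mod_cast hpos
        have : 0 ≤ Real.log ((patchesLam (n:ℝ)).ncard) := Real.log_nonneg h1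
        positivity
      · filter_upwards [eventually_ge_atTop 2] with n hn
        have hn2 : (2:ℝ) ≤ (n:ℝ) := by exact_mod_cast hn
        have hle := patch_ncard_real_le hn2
        have hlogn : Real.log (n:ℝ) ≤ (n:ℝ) - 1 :=
          Real.log_le_sub_one_of_pos (by linarith)
        have hub6 : ((patchesLam (n:ℝ)).ncard : ℝ) ≤ 6 * n := by linarith
        have ⟨_, hfin⟩ := patch_ncard_le hn2
        have hpos : 0 < (patchesLam (n:ℝ)).ncard :=
          (Set.ncard_pos hfin).mpr patch_nonempty
        have h1 : (0:ℝ) < ((patchesLam (n:ℝ)).ncard : ℝ) := by exact_mod_cast hpos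
        have hloglog : Real.log ((patchesLam (n:ℝ)).ncard) ≤ Real.log (6 * n) :=
          Real.log_le_log h1 hub6
        have hsplit : Real.log (6 * (n:ℝ)) = Real.log 6 + Real.log n :=
          Real.log_mul (by norm_num) (by positivity)
        have hden : (0:ℝ) < 2 * (n:ℝ) := by linarith
        rw [← add_div]
        apply div_le_div_of_nonneg_right (by linarith)
        exact hden.le
    exact htends.limsup_eq
end
end
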